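/- Let α ∈ (0, π), x ∈ ℝ and y > 0, and assume eˣ ≥ cos α and y·eˣ ≥ cos α. Then f_α(x + log y) ≤ f_α(x) + (sin α / (2·(cosh x − cos α)))·(y − 1). (This is the second-order Taylor estimate, with nonpositive remainder, used in the proof of the subharmonicity Proposition 5.7.) -/

import Mathlib

/-- The function `f_θ(x) = −arg(1 − exp(x + iθ))`, realizing the paper's
`f_θ(x) = (1/(2i))·log((1 − e^{x−iθ})/(1 − e^{x+iθ}))` with the branch of the
logarithm chosen so that `0 < f_θ < π`. -/
noncomputable def fAngle (θ x : ℝ) : ℝ :=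
  -Complex.arg (1 - Complex.exp (x + θ * Complex.I))

lemma coshSubCos_pos {α : ℝ} (hα₀ : 0 < α) (hαπ : α < Real.pi) (u : ℝ) :
    0 < Real.cosh u - Real.cos α := by
  have h1 : Real.cos α < 1 := by
    have := Real.cos_lt_cos_of_nonneg_of_le_pi le_rfl hαπ.le hα₀
    simpa using this
  have h2 : 1 ≤ Real.cosh u := Real.one_le_cosh u
  linarith

lemma fAngle_hasDerivAt {α : ℝ} (hα₀ : 0 < α) (hαπ : α < Real.pi) (x : ℝ) :
    HasDerivAt (fAngle α) (Real.sin α / (2 * (Real.cosh x - Real.cos α))) x := by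
  have hsin : 0 < Real.sin α := Real.sin_pos_of_pos_of_lt_pi hα₀ hαπ
  have hex : 0 < Real.exp x := Real.exp_pos x
  set w : ℝ → ℂ := fun t => 1 - Complex.exp (t + α * Complex.I) with hw
  have him : ∀ t : ℝ, (w t).im = -(Real.exp t * Real.sin α) := by
    intro t
    simp [hw, Complex.exp_im]
  have hre : ∀ t : ℝ, (w t).re = 1 - Real.exp t * Real.cos α := by
    intro t
    simp [hw, Complex.exp_re]
  have hwx_ne : w x ≠ 0 := by
    intro h
    have := him x
    rw [h] at this
    simp at this
    nlinarith
  have hw_deriv : HasDerivAt w (-(Complex.exp (x + α * Complex.I))) x := by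
    have h1 : HasDerivAt (fun z : ℂ => Complex.exp (z + α * Complex.I))
        (Complex.exp ((x : ℂ) + α * Complex.I)) x := by
      simpa using ((hasDerivAt_id (x : ℂ)).add_const ((α : ℂ) * Complex.I)).cexp
    have h2 := h1.comp_ofReal
    simpa [hw] using h2.const_sub 1
  have hslit : w x ∈ Complex.slitPlane :=
    Complex.mem_slitPlane_iff.2 (Or.inr (by rw [him x]; nlinarith))
  have hlog := hw_deriv.clog_real hslit
  have him_deriv : HasDerivAt (fun t : ℝ => (Complex.log (w t)).im)
      ((-(Complex.exp (x + α * Complex.I)) / w x).im) x :=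
    Complex.imCLM.hasFDerivAt.comp_hasDerivAt x hlog
  have hfun : fAngle α = fun t : ℝ => -(Complex.log (w t)).im := by
    funext t
    rw [fAngle, Complex.log_im]
  have hN : Complex.normSq (w x) = 2 * Real.exp x * (Real.cosh x - Real.cos α) := by
    rw [Complex.normSq_apply, hre x, him x, Real.cosh_eq, Real.exp_neg]
    have h1 : Real.exp x * (Real.exp x)⁻¹ = 1 := mul_inv_cancel₀ (Real.exp_pos x).ne'
    linear_combination (Real.exp x) ^ 2 * Real.sin_sq_add_cos_sq α - h1
  have hval : -((-(Complex.exp (x + α * Complex.I)) / w x).im)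
      = Real.sin α / (2 * (Real.cosh x - Real.cos α)) := by
    have hNpos : 0 < Complex.normSq (w x) := Complex.normSq_pos.2 hwx_ne
    rw [Complex.div_im]
    have hzre : (-(Complex.exp ((x:ℂ) + α * Complex.I))).re = -(Real.exp x * Real.cos α) := by
      simp [Complex.exp_re]
    have hzim : (-(Complex.exp ((x:ℂ) + α * Complex.I))).im = -(Real.exp x * Real.sin α) := by
      simp [Complex.exp_im]
    rw [hzre, hzim, hre x, him x, hN]
    have hc := coshSubCos_pos hα₀ hαπ x
    field_simp
    ring
  rw [hfun, ← hval]
  exact him_deriv.neg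

theorem fAngle_taylor_estimate (α x y : ℝ) (hα₀ : 0 < α) (hαπ : α < Real.pi)
    (hy : 0 < y) (h₁ : Real.cos α ≤ Real.exp x) (h₂ : Real.cos α ≤ y * Real.exp x) :
    fAngle α (x + Real.log y) ≤
      fAngle α x + Real.sin α / (2 * (Real.cosh x - Real.cos α)) * (y - 1) := by
  have hsin : 0 < Real.sin α := Real.sin_pos_of_pos_of_lt_pi hα₀ hαπ
  have hex : 0 < Real.exp x := Real.exp_pos x
  set a : ℝ := Real.exp x with ha
  set D : ℝ → ℝ := fun t => a * t ^ 2 - 2 * Real.cos α * t + a⁻¹ with hD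
  have hD_pos : ∀ t : ℝ, 0 < D t := by
    intro t
    have key : a * D t = (a * t - Real.cos α) ^ 2 + Real.sin α ^ 2 := by
      have h1 : a * a⁻¹ = 1 := mul_inv_cancel₀ hex.ne'
      have h2 := Real.sin_sq_add_cos_sq α
      rw [hD]; ring_nf; nlinarith [h1, h2]
    nlinarith [sq_nonneg (a * t - Real.cos α), mul_pos hsin hsin]
  have hD1 : D 1 = 2 * (Real.cosh x - Real.cos α) := by
    rw [hD]
    simp only [one_pow, mul_one]
    rw [Real.cosh_eq, Real.exp_neg]
    ring
  set c : ℝ := Real.sin α / (2 * (Real.cosh x - Real.cos α)) with hc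
  have hcD : c = Real.sin α / D 1 := by rw [hD1]
  have hG_deriv : ∀ t : ℝ, 0 < t →
      HasDerivAt (fun s => fAngle α (x + Real.log s)) (Real.sin α / D t) t := by
    intro t ht
    have hg : HasDerivAt (fun s : ℝ => x + Real.log s) t⁻¹ t :=
      (Real.hasDerivAt_log ht.ne').const_add x
    have h1 := (fAngle_hasDerivAt hα₀ hαπ (x + Real.log t)).comp t hg
    have hcosh : Real.cosh (x + Real.log t) = (a * t + a⁻¹ / t) / 2 := by
      rw [Real.cosh_eq, Real.exp_add, Real.exp_log ht, neg_add, Real.exp_add,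
        Real.exp_neg x, Real.exp_neg (Real.log t), Real.exp_log ht]
      ring
    have h3 : 2 * (Real.cosh (x + Real.log t) - Real.cos α) * t = D t := by
      rw [hcosh, hD]
      field_simp
      ring
    have h4 : Real.sin α / (2 * (Real.cosh (x + Real.log t) - Real.cos α)) * t⁻¹
        = Real.sin α / D t := by
      rw [← h3]
      have hC := coshSubCos_pos hα₀ hαπ (x + Real.log t)
      field_simp
    rw [← h4]
    exact h1
  set F : ℝ → ℝ := fun t => fAngle α x + c * (t - 1) - fAngle α (x + Real.log t) with hF
  have hF_deriv : ∀ t : ℝ, 0 < t → HasDerivAt F (c - Real.sin α / D t) t := by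
    intro t ht
    have := ((((hasDerivAt_id t).sub_const 1).const_mul c).const_add (fAngle α x)).sub
      (hG_deriv t ht)
    have e : F = ((fun x_1 => fAngle α x + c * (id x_1 - 1)) - fun s => fAngle α (x + Real.log s)) := by funext s; simp [hF]
    rw [e]; rw [mul_one c] at this; exact this
  have hF1 : F 1 = 0 := by simp [hF]
  have key : 0 ≤ F y := by
    rcases le_total 1 y with hy1 | hy1
    · have hmono : MonotoneOn F (Set.Icc 1 y) := by
        apply monotoneOn_of_hasDerivWithinAt_nonneg (f' := fun t => c - Real.sin α / D t)
          (convex_Icc 1 y)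
        · intro t ht
          exact (hF_deriv t (lt_of_lt_of_le one_pos ht.1)).continuousAt.continuousWithinAt
        · intro t ht
          rw [interior_Icc] at ht
          exact (hF_deriv t (lt_trans one_pos ht.1)).hasDerivWithinAt
        · intro t ht
          rw [interior_Icc] at ht
          have ht1 : 1 ≤ t := ht.1.le
          have hDle : D 1 ≤ D t := by
            rw [hD]
            simp only
            nlinarith [mul_nonneg (sub_nonneg.2 ht1) (sub_nonneg.2 h₁),
              mul_nonneg hex.le (sq_nonneg (t - 1))]
          have : Real.sin α / D t ≤ Real.sin α / D 1 :=
            div_le_div_of_nonneg_left hsin.le (hD_pos 1) hDle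
          rw [hcD]; linarith
      have := hmono (Set.left_mem_Icc.2 hy1) (Set.right_mem_Icc.2 hy1) hy1
      linarith [hF1 ▸ this]
    · have hanti : AntitoneOn F (Set.Icc y 1) := by
        apply antitoneOn_of_hasDerivWithinAt_nonpos (f' := fun t => c - Real.sin α / D t)
          (convex_Icc y 1)
        · intro t ht
          exact (hF_deriv t (lt_of_lt_of_le hy ht.1)).continuousAt.continuousWithinAt
        · intro t ht
          rw [interior_Icc] at ht
          exact (hF_deriv t (lt_trans hy ht.1)).hasDerivWithinAt
        · intro t ht
          rw [interior_Icc] at ht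
          have hyt : y ≤ t := ht.1.le
          have hat : 0 ≤ a * t - Real.cos α := by
            nlinarith [mul_nonneg hex.le (sub_nonneg.2 hyt)]
          have hDle : D t ≤ D 1 := by
            rw [hD]
            simp only
            nlinarith [mul_nonneg (sub_nonneg.2 ht.2.le) (sub_nonneg.2 h₁),
              mul_nonneg (sub_nonneg.2 ht.2.le) hat]
          have : Real.sin α / D 1 ≤ Real.sin α / D t :=
            div_le_div_of_nonneg_left hsin.le (hD_pos t) hDle
          rw [hcD]; linarith
      have := hanti (Set.left_mem_Icc.2 hy1) (Set.right_mem_Icc.2 hy1) hy1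
      linarith [hF1 ▸ this]
  rw [hF] at key
  simp only at key
  linarith
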